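/- Let S = (N, M0) be a live augmented marked graph in which every minimal siphon induces a conservative P-subnet. Then for every potentially reachable marking M ∈ PR(S), the system (N, M) is live; in particular S is strongly live. -/

import Mathlib

open scoped Classical

structure PetriNet (P T : Type) where
  pre : P → T → ℕ
  post : T → P → ℕ

namespace PetriNet

variable {P T : Type}

def enabled (N : PetriNet P T) (M : P → ℕ) (t : T) : Prop :=
  ∀ p, N.pre p t ≤ M p

def fire (N : PetriNet P T) (M : P → ℕ) (t : T) : P → ℕ :=
  fun p => M p - N.pre p t + N.post t p

def feasible (N : PetriNet P T) : (P → ℕ) → List T → (P → ℕ) → Prop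
  | M, [], M' => M' = M
  | M, t :: σ, M' => N.enabled M t ∧ feasible N (N.fire M t) σ M'

def reachable (N : PetriNet P T) (M0 M : P → ℕ) : Prop :=
  ∃ σ : List T, N.feasible M0 σ M

def inc (N : PetriNet P T) (p : P) (t : T) : ℤ :=
  (N.post t p : ℤ) - (N.pre p t : ℤ)

def potReach [Fintype T] (N : PetriNet P T) (M0 M : P → ℕ) : Prop :=
  ∃ Y : T → ℕ, ∀ p, (M p : ℤ) = (M0 p : ℤ) + ∑ t, N.inc p t * (Y t : ℤ)

def live (N : PetriNet P T) (M0 : P → ℕ) : Prop :=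
  ∀ (t : T) (M : P → ℕ), N.reachable M0 M →
    ∃ M', N.reachable M M' ∧ N.enabled M' t

def bounded (N : PetriNet P T) (M0 : P → ℕ) : Prop :=
  ∃ k : ℕ, ∀ M : P → ℕ, N.reachable M0 M → ∀ p, M p ≤ k

def reversible (N : PetriNet P T) (M0 : P → ℕ) : Prop :=
  ∀ M : P → ℕ, N.reachable M0 M → N.reachable M M0

def rev (N : PetriNet P T) : PetriNet P T :=
  ⟨fun p t => N.post t p, fun t p => N.pre p t⟩

def propR (N : PetriNet P T) (M0 : P → ℕ) : Prop :=
  N.reversible M0 ∧ N.rev.reversible M0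

def placePre [Fintype T] (N : PetriNet P T) (p : P) : Finset T :=
  Finset.univ.filter fun t => 0 < N.post t p

def placePost [Fintype T] (N : PetriNet P T) (p : P) : Finset T :=
  Finset.univ.filter fun t => 0 < N.pre p t

def transPre [Fintype P] (N : PetriNet P T) (t : T) : Finset P :=
  Finset.univ.filter fun p => 0 < N.pre p t

def transPost [Fintype P] (N : PetriNet P T) (t : T) : Finset P :=
  Finset.univ.filter fun p => 0 < N.post t p

def arc (N : PetriNet P T) : (P ⊕ T) → (P ⊕ T) → Prop
  | Sum.inl p, Sum.inr t => 0 < N.pre p t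
  | Sum.inr t, Sum.inl p => 0 < N.post t p
  | _, _ => False

def stronglyConnected (N : PetriNet P T) : Prop :=
  ∀ x y : P ⊕ T, Relation.ReflTransGen N.arc x y

def connectedNet (N : PetriNet P T) : Prop :=
  ∀ x y : P ⊕ T, Relation.ReflTransGen (fun a b => N.arc a b ∨ N.arc b a) x y

def ordinary (N : PetriNet P T) : Prop :=
  ∀ p t, N.pre p t ≤ 1 ∧ N.post t p ≤ 1

def isWMGle [Fintype T] (N : PetriNet P T) : Prop :=
  ∀ p, (N.placePre p).card ≤ 1 ∧ (N.placePost p).card ≤ 1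

def deadlock (N : PetriNet P T) (M : P → ℕ) : Prop :=
  ∀ t, ¬ N.enabled M t

end PetriNet


namespace PetriNet

variable {Q T : Type}

/-- The net obtained by removing the places of `R` together with their adjacent arcs. -/
def delPlaces (N : PetriNet Q T) (R : Finset Q) : PetriNet {p : Q // p ∉ R} T :=
  ⟨fun p t => N.pre p.1 t, fun t p => N.post t p.1⟩

/-- A marked graph: ordinary, and every place has exactly one input and one output
transition. -/
def isMarkedGraph {P : Type} [Fintype T] (N : PetriNet P T) : Prop :=
  N.ordinary ∧ ∀ p, (N.placePre p).card = 1 ∧ (N.placePost p).card = 1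

/-- An elementary directed path from node `x` to node `y`. -/
def elemPath {P : Type} (N : PetriNet P T) (x y : P ⊕ T) : Prop :=
  ∃ l : List (P ⊕ T), l.Chain' N.arc ∧ l.head? = some x ∧ l.getLast? = some y ∧ l.Nodup

/-- An elementary directed path from `x` to `y`, none of whose places is marked by `M`. -/
def elemPathUnmarked {P : Type} (N : PetriNet P T) (M : P → ℕ) (x y : P ⊕ T) : Prop :=
  ∃ l : List (P ⊕ T), l.Chain' N.arc ∧ l.head? = some x ∧ l.getLast? = some y ∧ l.Nodup ∧
    ∀ p : P, Sum.inl p ∈ l → M p = 0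

/-- `l` lists the nodes (each exactly once) of an elementary circuit. -/
def isElemCircuit {P : Type} (N : PetriNet P T) : List (P ⊕ T) → Prop
  | [] => False
  | x :: xs => (x :: xs).Nodup ∧ List.Chain N.arc x (xs ++ [x])

/-- Augmented marked graph with resource places `R`. -/
def isAMG [Fintype Q] [Fintype T] (N : PetriNet Q T) (M0 : Q → ℕ) (R : Finset Q) : Prop :=
  -- ordinary net
  N.ordinary ∧
  -- (H1) removing the resource places yields a marked graph
  isMarkedGraph (N.delPlaces R) ∧
  -- (H2) and paths of (H4)
  (∀ r ∈ R, ∃ D : Finset (T × T),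
    2 ≤ D.card ∧
    Set.InjOn Prod.fst (↑D : Set (T × T)) ∧
    Set.InjOn Prod.snd (↑D : Set (T × T)) ∧
    (∀ t : T, 0 < N.pre r t ↔ ∃ ab ∈ D, ab.1 = t) ∧
    (∀ t : T, 0 < N.post t r ↔ ∃ ab ∈ D, ab.2 = t) ∧
    (∀ ab ∈ D, ab.1 ≠ ab.2 →
      elemPath (N.delPlaces R) (Sum.inr ab.1) (Sum.inr ab.2)) ∧
    (∀ ab ∈ D, ab.1 ≠ ab.2 →
      elemPathUnmarked (N.delPlaces R) (fun p => M0 p.1) (Sum.inr ab.1) (Sum.inr ab.2))) ∧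
  -- (H3) each elementary circuit of the underlying marked graph is marked
  (∀ l : List ({p : Q // p ∉ R} ⊕ T), isElemCircuit (N.delPlaces R) l →
    ∃ p : {p : Q // p ∉ R}, Sum.inl p ∈ l ∧ 0 < M0 p.1) ∧
  -- (H4) each resource place is initially marked
  (∀ r ∈ R, 0 < M0 r)

end PetriNet

namespace PetriNet

variable {P T : Type}

def isSiphon (N : PetriNet P T) (D : Finset P) : Prop :=
  ∀ t, (∃ p ∈ D, 0 < N.post t p) → ∃ p ∈ D, 0 < N.pre p t

def isTrap (N : PetriNet P T) (D : Finset P) : Prop :=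
  ∀ t, (∃ p ∈ D, 0 < N.pre p t) → ∃ p ∈ D, 0 < N.post t p

def isMinSiphon (N : PetriNet P T) (D : Finset P) : Prop :=
  D.Nonempty ∧ N.isSiphon D ∧ ∀ D' : Finset P, D' ⊂ D → N.isSiphon D' → D' = ∅

def isMinTrap (N : PetriNet P T) (D : Finset P) : Prop :=
  D.Nonempty ∧ N.isTrap D ∧ ∀ D' : Finset P, D' ⊂ D → N.isTrap D' → D' = ∅

/-- The P-subnet induced by `D` is conservative. -/
def inducedConservative [Fintype T] (N : PetriNet P T) (D : Finset P) : Prop :=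
  ∃ X : P → ℕ, (∀ p ∈ D, 1 ≤ X p) ∧
    ∀ t : T, (∃ p ∈ D, 0 < N.pre p t ∨ 0 < N.post t p) →
      (∑ p ∈ D, (X p : ℤ) * N.inc p t) = 0

end PetriNet
namespace PetriNet

section AuxBasic

variable {Q T : Type}

theorem feasible_append (N : PetriNet Q T) :
    ∀ (σ₁ : List T) (M M₁ : Q → ℕ), N.feasible M σ₁ M₁ →
      ∀ (σ₂ : List T) (M₂ : Q → ℕ), N.feasible M₁ σ₂ M₂ →
        N.feasible M (σ₁ ++ σ₂) M₂ := by
  intro σ₁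
  induction σ₁ with
  | nil =>
    intro M M₁ h σ₂ M₂ h₂
    have : M₁ = M := h
    simpa [this] using h₂
  | cons t σ ih =>
    intro M M₁ h σ₂ M₂ h₂
    exact ⟨h.1, ih _ _ h.2 _ _ h₂⟩

theorem reachable_refl (N : PetriNet Q T) (M : Q → ℕ) : N.reachable M M :=
  ⟨[], rfl⟩

theorem reachable_trans (N : PetriNet Q T) {M M₁ M₂ : Q → ℕ}
    (h₁ : N.reachable M M₁) (h₂ : N.reachable M₁ M₂) : N.reachable M M₂ := by
  obtain ⟨σ₁, h₁⟩ := h₁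
  obtain ⟨σ₂, h₂⟩ := h₂
  exact ⟨σ₁ ++ σ₂, N.feasible_append σ₁ _ _ h₁ σ₂ _ h₂⟩

theorem fire_cast {N : PetriNet Q T} {M : Q → ℕ} {t : T} (h : N.enabled M t) (p : Q) :
    (N.fire M t p : ℤ) = (M p : ℤ) + N.inc p t := by
  have := h p
  unfold fire inc
  push_cast [Nat.cast_sub this]
  ring

end AuxBasic

section AuxFin
set_option linter.unusedSectionVars false

variable {Q T : Type} [Fintype Q] [Fintype T]

theorem potReach_refl (N : PetriNet Q T) (M : Q → ℕ) : N.potReach M M := by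
  refine ⟨fun _ => 0, fun p => ?_⟩
  simp

theorem potReach_trans {N : PetriNet Q T} {M M₁ M₂ : Q → ℕ}
    (h₁ : N.potReach M M₁) (h₂ : N.potReach M₁ M₂) : N.potReach M M₂ := by
  obtain ⟨Y₁, h₁⟩ := h₁
  obtain ⟨Y₂, h₂⟩ := h₂
  refine ⟨fun t => Y₁ t + Y₂ t, fun p => ?_⟩
  rw [h₂ p, h₁ p, add_assoc, ← Finset.sum_add_distrib]
  congr 1
  refine Finset.sum_congr rfl fun t _ => ?_
  push_cast
  ring

theorem potReach_fire {N : PetriNet Q T} {M : Q → ℕ} {t : T} (h : N.enabled M t) :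
    N.potReach M (N.fire M t) := by
  classical
  refine ⟨fun t' => if t' = t then 1 else 0, fun p => ?_⟩
  rw [fire_cast h p]
  congr 1
  rw [Finset.sum_congr rfl (g := fun t' => if t' = t then N.inc p t' else 0)]
  · simp
  · intro x _
    by_cases hx : x = t <;> simp [hx]

theorem reachable_potReach {N : PetriNet Q T} :
    ∀ (σ : List T) (M M₁ : Q → ℕ), N.feasible M σ M₁ → N.potReach M M₁ := by
  intro σ
  induction σ with
  | nil =>
    intro M M₁ h
    have : M₁ = M := h
    subst this
    exact N.potReach_refl M₁
  | cons t σ ih =>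
    intro M M₁ h
    exact potReach_trans (potReach_fire h.1) (ih _ _ h.2)

theorem reachable_potReach' {N : PetriNet Q T} {M M₁ : Q → ℕ} (h : N.reachable M M₁) :
    N.potReach M M₁ := by
  obtain ⟨σ, h⟩ := h
  exact reachable_potReach σ _ _ h

end AuxFin

end PetriNet
namespace PetriNet

section AuxStruct
set_option linter.unusedSectionVars false

variable {Q T : Type} [Fintype Q] [Fintype T]

/-- Sum of an indicator (0/1-valued with unique positive point) times a function. -/
theorem sum_indicator_mul {f : T → ℕ} {t₀ : T} (h1 : ∀ t, 0 < f t ↔ t = t₀)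
    (h2 : ∀ t, f t ≤ 1) (g : T → ℤ) : ∑ t, (f t : ℤ) * g t = g t₀ := by
  classical
  have hf : ∀ t, (f t : ℤ) = if t = t₀ then 1 else 0 := by
    intro t
    by_cases ht : t = t₀
    · have h0 : 0 < f t := (h1 t).2 ht
      have hft : f t = 1 := le_antisymm (h2 t) h0
      rw [ht] at hft ⊢
      simp [hft]
    · have : ¬ 0 < f t := fun hc => ht ((h1 t).1 hc)
      have : f t = 0 := Nat.eq_zero_of_not_pos this
      simp [ht, this]
  calc ∑ t, (f t : ℤ) * g t = ∑ t, (if t = t₀ then g t else 0) := by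
        refine Finset.sum_congr rfl fun t _ => ?_
        rw [hf t]
        by_cases ht : t = t₀ <;> simp [ht]
    _ = g t₀ := by simp

theorem sum_nat_cast_eq_card {f : T → ℕ} (h2 : ∀ t, f t ≤ 1) :
    ∑ t, (f t : ℤ) = ((Finset.univ.filter fun t => 0 < f t).card : ℤ) := by
  classical
  rw [Finset.card_filter]
  push_cast
  refine Finset.sum_congr rfl fun t _ => ?_
  by_cases ht : 0 < f t
  · have : f t = 1 := le_antisymm (h2 t) ht
    simp [this, ht]
  · have : f t = 0 := Nat.eq_zero_of_not_pos ht
    simp [this]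

variable {N : PetriNet Q T} {M0 : Q → ℕ} {R : Finset Q}

/-- Unique producer and consumer of a non-resource place, with the incidence sum formula. -/
theorem amg_nonres (hAMG : N.isAMG M0 R) {p : Q} (hp : p ∉ R) :
    ∃ tp tc : T, (∀ t, 0 < N.post t p ↔ t = tp) ∧ (∀ t, 0 < N.pre p t ↔ t = tc) ∧
      ∀ W : T → ℕ, ∑ t, N.inc p t * (W t : ℤ) = (W tp : ℤ) - (W tc : ℤ) := by
  classical
  obtain ⟨hord, ⟨hordG, hMG⟩, -, -, -⟩ := hAMG
  obtain ⟨h1, h2⟩ := hMG ⟨p, hp⟩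
  obtain ⟨tp, htp⟩ := Finset.card_eq_one.mp h1
  obtain ⟨tc, htc⟩ := Finset.card_eq_one.mp h2
  have hptp : ∀ t, 0 < N.post t p ↔ t = tp := by
    intro t
    have : t ∈ (N.delPlaces R).placePre ⟨p, hp⟩ ↔ t ∈ ({tp} : Finset T) := by rw [htp]
    exact (and_iff_right (Finset.mem_univ t)).symm.trans (Finset.mem_filter.symm.trans (this.trans Finset.mem_singleton))
  have hptc : ∀ t, 0 < N.pre p t ↔ t = tc := by
    intro t
    have : t ∈ (N.delPlaces R).placePost ⟨p, hp⟩ ↔ t ∈ ({tc} : Finset T) := by rw [htc]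
    exact (and_iff_right (Finset.mem_univ t)).symm.trans (Finset.mem_filter.symm.trans (this.trans Finset.mem_singleton))
  refine ⟨tp, tc, hptp, hptc, fun W => ?_⟩
  have e1 : ∑ t, ((N.post t p : ℤ)) * (W t : ℤ) = (W tp : ℤ) :=
    sum_indicator_mul hptp (fun t => (hord p t).2) _
  have e2 : ∑ t, ((N.pre p t : ℤ)) * (W t : ℤ) = (W tc : ℤ) :=
    sum_indicator_mul hptc (fun t => (hord p t).1) _
  calc ∑ t, N.inc p t * (W t : ℤ)
      = ∑ t, (((N.post t p : ℤ)) * (W t : ℤ) - ((N.pre p t : ℤ)) * (W t : ℤ)) := by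
        refine Finset.sum_congr rfl fun t _ => ?_
        unfold inc
        ring
    _ = (W tp : ℤ) - (W tc : ℤ) := by rw [Finset.sum_sub_distrib, e1, e2]

/-- The all-ones vector is a T-invariant of an AMG. -/
theorem amg_sum_inc_zero (hAMG : N.isAMG M0 R) (p : Q) : ∑ t, N.inc p t = 0 := by
  classical
  by_cases hp : p ∈ R
  · obtain ⟨hord, -, hH2, -, -⟩ := hAMG
    obtain ⟨Dr, -, hinjf, hinjs, hpre, hpost, -, -⟩ := hH2 p hp
    have e1 : ∑ t, ((N.pre p t : ℤ)) = ((Finset.univ.filter fun t => 0 < N.pre p t).card : ℤ) :=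
      sum_nat_cast_eq_card (fun t => (hord p t).1)
    have e2 : ∑ t, ((N.post t p : ℤ)) = ((Finset.univ.filter fun t => 0 < N.post t p).card : ℤ) :=
      sum_nat_cast_eq_card (fun t => (hord p t).2)
    have hf1 : (Finset.univ.filter fun t => 0 < N.pre p t) = Dr.image Prod.fst := by
      ext t
      simp only [Finset.mem_filter, Finset.mem_univ, true_and, Finset.mem_image]
      rw [hpre t]
    have hf2 : (Finset.univ.filter fun t => 0 < N.post t p) = Dr.image Prod.snd := by
      ext t
      simp only [Finset.mem_filter, Finset.mem_univ, true_and, Finset.mem_image]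
      rw [hpost t]
    have hc1 : (Dr.image Prod.fst).card = Dr.card := Finset.card_image_of_injOn hinjf
    have hc2 : (Dr.image Prod.snd).card = Dr.card := Finset.card_image_of_injOn hinjs
    have : ∑ t, N.inc p t = ∑ t, ((N.post t p : ℤ)) - ∑ t, ((N.pre p t : ℤ)) := by
      rw [← Finset.sum_sub_distrib]
      rfl
    rw [this, e1, e2, hf1, hf2, hc1, hc2]
    ring
  · obtain ⟨tp, tc, -, -, hsum⟩ := amg_nonres hAMG hp
    have := hsum (fun _ => 1)
    simpa using this

/-- A place of an AMG always has at least one output transition. -/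
theorem amg_consumer_exists (hAMG : N.isAMG M0 R) (p : Q) : ∃ t, 0 < N.pre p t := by
  classical
  by_cases hp : p ∈ R
  · obtain ⟨-, -, hH2, -, -⟩ := hAMG
    obtain ⟨Dr, hcard, -, -, hpre, -, -, -⟩ := hH2 p hp
    have : Dr.Nonempty := Finset.card_pos.mp (by omega)
    obtain ⟨ab, hab⟩ := this
    exact ⟨ab.1, (hpre ab.1).2 ⟨ab, hab, rfl⟩⟩
  · obtain ⟨-, tc, -, htc, -⟩ := amg_nonres hAMG hp
    exact ⟨tc, (htc tc).2 rfl⟩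

end AuxStruct

end PetriNet
namespace PetriNet

section AuxSiphon
set_option linter.unusedSectionVars false

variable {Q T : Type} [Fintype Q] [Fintype T]

/-- Every nonempty siphon contains a minimal siphon. -/
theorem exists_minSiphon (N : PetriNet Q T) :
    ∀ n (D : Finset Q), D.card ≤ n → D.Nonempty → N.isSiphon D →
      ∃ D', D' ⊆ D ∧ N.isMinSiphon D' := by
  intro n
  induction n with
  | zero =>
    intro D hcard hne _
    obtain ⟨p, hp⟩ := hne
    have : 0 < D.card := Finset.card_pos.mpr ⟨p, hp⟩
    omega
  | succ n ih =>
    intro D hcard hne hsi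
    by_cases hmin : ∀ D' : Finset Q, D' ⊂ D → N.isSiphon D' → D' = ∅
    · exact ⟨D, le_refl D, hne, hsi, hmin⟩
    · push_neg at hmin
      obtain ⟨D', hss, hsi', hne'⟩ := hmin
      have hne'' : D'.Nonempty := hne'
      have hlt : D'.card < D.card := Finset.card_lt_card hss
      obtain ⟨D'', h1, h2⟩ := ih D' (by omega) hne'' hsi'
      exact ⟨D'', h1.trans hss.subset, h2⟩

variable {N : PetriNet Q T} {M0 : Q → ℕ} {R : Finset Q}

/-- The weighted token count of a conservative minimal siphon is invariant over `potReach`. -/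
theorem siphon_inv {D : Finset Q} {X : Q → ℕ}
    (hX : ∀ t : T, (∃ p ∈ D, 0 < N.pre p t ∨ 0 < N.post t p) →
      (∑ p ∈ D, (X p : ℤ) * N.inc p t) = 0)
    {M : Q → ℕ} (hM : N.potReach M0 M) :
    ∑ p ∈ D, (X p : ℤ) * M p = ∑ p ∈ D, (X p : ℤ) * M0 p := by
  classical
  obtain ⟨Y, hY⟩ := hM
  have : ∑ p ∈ D, (X p : ℤ) * M p
      = ∑ p ∈ D, (X p : ℤ) * M0 p + ∑ p ∈ D, (X p : ℤ) * (∑ t, N.inc p t * (Y t : ℤ)) := by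
    rw [← Finset.sum_add_distrib]
    refine Finset.sum_congr rfl fun p _ => ?_
    rw [hY p]
    ring
  rw [this]
  have hz : ∑ p ∈ D, (X p : ℤ) * (∑ t, N.inc p t * (Y t : ℤ)) = 0 := by
    have swap : ∑ p ∈ D, (X p : ℤ) * (∑ t, N.inc p t * (Y t : ℤ))
        = ∑ t, (Y t : ℤ) * (∑ p ∈ D, (X p : ℤ) * N.inc p t) := by
      calc ∑ p ∈ D, (X p : ℤ) * (∑ t, N.inc p t * (Y t : ℤ))
          = ∑ p ∈ D, ∑ t, (Y t : ℤ) * ((X p : ℤ) * N.inc p t) := by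
            refine Finset.sum_congr rfl fun p _ => ?_
            rw [Finset.mul_sum]
            refine Finset.sum_congr rfl fun t _ => ?_
            ring
        _ = ∑ t, ∑ p ∈ D, (Y t : ℤ) * ((X p : ℤ) * N.inc p t) := Finset.sum_comm
        _ = ∑ t, (Y t : ℤ) * (∑ p ∈ D, (X p : ℤ) * N.inc p t) := by
            refine Finset.sum_congr rfl fun t _ => ?_
            rw [Finset.mul_sum]
    rw [swap]
    refine Finset.sum_eq_zero fun t _ => ?_
    by_cases ht : ∃ p ∈ D, 0 < N.pre p t ∨ 0 < N.post t p
    · rw [hX t ht]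
      ring
    · push_neg at ht
      have : ∀ p ∈ D, (X p : ℤ) * N.inc p t = 0 := by
        intro p hp
        have h1 := (ht p hp).1
        have h2 := (ht p hp).2
        have e1 : N.pre p t = 0 := Nat.eq_zero_of_not_pos (by omega)
        have e2 : N.post t p = 0 := Nat.eq_zero_of_not_pos (by omega)
        unfold inc
        rw [e1, e2]
        ring
      rw [Finset.sum_eq_zero this]
      ring
  rw [hz]
  ring

/-- Every minimal siphon is marked at every potentially reachable marking. -/
theorem minSiphon_marked (hAMG : N.isAMG M0 R) (hlive : N.live M0)
    (hsiph : ∀ D : Finset Q, N.isMinSiphon D → N.inducedConservative D)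
    {D : Finset Q} (hD : N.isMinSiphon D) {Mc : Q → ℕ} (hMc : N.potReach M0 Mc) :
    ∃ p ∈ D, 0 < Mc p := by
  classical
  obtain ⟨X, hX1, hX2⟩ := hsiph D hD
  -- the invariant value is positive at M0
  obtain ⟨p0, hp0⟩ := hD.1
  obtain ⟨t0, ht0⟩ := amg_consumer_exists hAMG p0
  obtain ⟨M1, hM1r, hM1e⟩ := hlive t0 M0 (N.reachable_refl M0)
  have hM1pr : N.potReach M0 M1 := reachable_potReach' hM1r
  have hpos1 : (1 : ℤ) ≤ ∑ p ∈ D, (X p : ℤ) * M1 p := by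
    have hterm : (1 : ℤ) ≤ (X p0 : ℤ) * M1 p0 := by
      have h1 : 1 ≤ X p0 := hX1 p0 hp0
      have h2 : 1 ≤ M1 p0 := le_trans ht0 (hM1e p0)
      have : (1 : ℤ) * 1 ≤ (X p0 : ℤ) * M1 p0 := by
        apply mul_le_mul
        · exact_mod_cast h1
        · exact_mod_cast h2
        · norm_num
        · positivity
      simpa using this
    have hnn : ∀ p ∈ D, 0 ≤ (X p : ℤ) * M1 p := by
      intro p _
      positivity
    calc (1 : ℤ) ≤ (X p0 : ℤ) * M1 p0 := hterm
      _ ≤ ∑ p ∈ D, (X p : ℤ) * M1 p := Finset.single_le_sum hnn hp0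
  have hval : ∑ p ∈ D, (X p : ℤ) * Mc p = ∑ p ∈ D, (X p : ℤ) * M1 p := by
    rw [siphon_inv hX2 hMc, siphon_inv hX2 hM1pr]
  by_contra hcon
  push_neg at hcon
  have : ∑ p ∈ D, (X p : ℤ) * Mc p = 0 := by
    refine Finset.sum_eq_zero fun p hp => ?_
    have : Mc p = 0 := Nat.eq_zero_of_not_pos (by exact fun hc => absurd hc (by simpa using hcon p hp))
    rw [this]
    ring
  omega

end AuxSiphon

end PetriNet
namespace PetriNet

section AuxArc
variable {P T : Type}

theorem arc_inl_inr {NG : PetriNet P T} {q : P} {t : T} :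
    NG.arc (Sum.inl q) (Sum.inr t) ↔ 0 < NG.pre q t := Iff.rfl

theorem arc_inr_inl {NG : PetriNet P T} {q : P} {t : T} :
    NG.arc (Sum.inr t) (Sum.inl q) ↔ 0 < NG.post t q := Iff.rfl

theorem arc_inr_inr {NG : PetriNet P T} {t t' : T} : ¬ NG.arc (Sum.inr t) (Sum.inr t') :=
  fun h => h

theorem arc_inl_inl {NG : PetriNet P T} {q q' : P} : ¬ NG.arc (Sum.inl q) (Sum.inl q') :=
  fun h => h

end AuxArc

/-- The set of "blocked" places in a stuck scheduling state. -/
inductive Blk {Q T : Type} [Fintype T] (N : PetriNet Q T) (M0 : Q → ℕ) (R : Finset Q)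
    (Mc : Q → ℕ) (W : T → ℕ) : Q → Prop
  | base (p : Q) (t : T) : 0 < W t → 0 < N.pre p t → Mc p = 0 →
      Blk N M0 R Mc W p
  | path (r : Q) (a b : T) (l : List ({p : Q // p ∉ R} ⊕ T)) (q : {p : Q // p ∉ R}) :
      Blk N M0 R Mc W r → 0 < N.pre r a → W b = 0 → a ≠ b →
      l.Chain' (N.delPlaces R).arc → l.head? = some (Sum.inr a) →
      l.getLast? = some (Sum.inr b) →
      (∀ x : {p : Q // p ∉ R}, Sum.inl x ∈ l → M0 x.1 = 0) →
      Sum.inl q ∈ l → Blk N M0 R Mc W q.1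

section AuxWalk
set_option linter.unusedSectionVars false

variable {Q T : Type} [Fintype Q] [Fintype T]
variable {N : PetriNet Q T} {M0 : Q → ℕ} {R : Finset Q}

/-- Walking backwards along an (initially unmarked) path whose final transition has
zero remaining plan count: all places on it are empty at `Mc`, and each place's unique
producer is either the path's start or consumes the previous path place. -/
theorem walk (hAMG : N.isAMG M0 R) {Mc : Q → ℕ} {W : T → ℕ}
    (hbal : ∀ p, (M0 p : ℤ) = (Mc p : ℤ) + ∑ t, N.inc p t * (W t : ℤ)) :
    ∀ (n : ℕ) (rl : List ({p : Q // p ∉ R} ⊕ T)) (u a : T), rl.length ≤ n → W u = 0 →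
      List.Chain' (flip (N.delPlaces R).arc) (Sum.inr u :: rl) →
      (∀ x : {p : Q // p ∉ R}, Sum.inl x ∈ rl → M0 x.1 = 0) →
      (Sum.inr u :: rl).getLast? = some (Sum.inr a) →
      ∀ q : {p : Q // p ∉ R}, Sum.inl q ∈ rl →
        Mc q.1 = 0 ∧ ∀ t', 0 < N.post t' q.1 →
          (t' = a ∨ ∃ q' : {p : Q // p ∉ R}, Sum.inl q' ∈ rl ∧ 0 < N.pre q'.1 t') := by
  intro n
  induction n with
  | zero =>
    intro rl u a hlen _ _ _ _ q hq
    have : rl = [] := List.length_eq_zero_iff.mp (by omega)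
    subst this
    simp at hq
  | succ n ih =>
    intro rl u a hlen hWu hch hunm hlast q hq
    match rl, hq with
    | x :: rest, hq =>
    -- the first element must be a place
    have hx1 : (flip (N.delPlaces R).arc) (Sum.inr u) x := (List.isChain_cons_cons.mp hch).1
    have hch2 : List.Chain' (flip (N.delPlaces R).arc) (x :: rest) := (List.isChain_cons_cons.mp hch).2
    match x, hx1 with
    | Sum.inr t, hx1 => exact absurd hx1 arc_inr_inr
    | Sum.inl q₀, hx1 =>
    have hq₀u : 0 < N.pre q₀.1 u := hx1
    obtain ⟨tp, tc, htp, htc, hsum⟩ := amg_nonres hAMG q₀.2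
    have hutc : u = tc := (htc u).1 hq₀u
    have hM0q₀ : M0 q₀.1 = 0 := hunm q₀ (List.mem_cons_self)
    have hq₀empty : Mc q₀.1 = 0 ∧ W tp = 0 := by
      have hb := hbal q₀.1
      rw [hsum W, hM0q₀, ← hutc, hWu] at hb
      have h1 : (0:ℤ) ≤ (Mc q₀.1 : ℤ) := by positivity
      have h2 : (0:ℤ) ≤ (W tp : ℤ) := by positivity
      constructor <;> omega
    match rest, hq with
    | [], hq =>
      -- impossible: the walk must end at the transition `a`
      exfalso
      simp [List.getLast?] at hlast
    | y :: rest', hq =>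
    have hy1 : (flip (N.delPlaces R).arc) (Sum.inl q₀) y := (List.isChain_cons_cons.mp hch2).1
    have hch3 : List.Chain' (flip (N.delPlaces R).arc) (y :: rest') := (List.isChain_cons_cons.mp hch2).2
    match y, hy1 with
    | Sum.inl q', hy1 => exact absurd hy1 arc_inl_inl
    | Sum.inr v, hy1 =>
    have hvq₀ : 0 < N.post v q₀.1 := hy1
    have hvtp : v = tp := (htp v).1 hvq₀
    have hWv : W v = 0 := by rw [hvtp]; exact hq₀empty.2
    have hlast' : (Sum.inr v :: rest').getLast? = some (Sum.inr a) := by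
      rw [List.getLast?_cons_cons, List.getLast?_cons_cons] at hlast
      exact hlast
    have hih := ih rest' v a (by simp at hlen ⊢; omega) hWv hch3
      (fun x hx => hunm x (by simp [hx]))
      hlast'
    rcases List.mem_cons.mp hq with hq | hq
    · -- q = q₀
      have hqq : q = q₀ := by injection hq with h
      subst hqq
      refine ⟨hq₀empty.1, fun t' ht' => ?_⟩
      have ht'tp : t' = tp := (htp t').1 ht'
      match rest', hlast', hch3 with
      | [], hlast', _ =>
        have hva : v = a := by
          simp [List.getLast?] at hlast'
          exact hlast'
        left
        rw [ht'tp, ← hvtp, hva]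
      | z :: rest'', hlast', hch3 =>
        have hz1 : (flip (N.delPlaces R).arc) (Sum.inr v) z := (List.isChain_cons_cons.mp hch3).1
        match z, hz1 with
        | Sum.inr w, hz1 => exact absurd hz1 arc_inr_inr
        | Sum.inl q₁, hz1 =>
          have hq₁v : 0 < N.pre q₁.1 v := hz1
          right
          refine ⟨q₁, by simp, ?_⟩
          rw [ht'tp, ← hvtp]
          exact hq₁v
    · -- q in the tail
      have hq' : Sum.inl q ∈ rest' := by
        rcases List.mem_cons.mp hq with h | h
        · exact absurd h (by simp)
        · exact h
      obtain ⟨hMc, hcov⟩ := hih q hq'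
      refine ⟨hMc, fun t' ht' => ?_⟩
      rcases hcov t' ht' with h | ⟨q'', hq'', hpre⟩
      · exact Or.inl h
      · exact Or.inr ⟨q'', by simp [hq''], hpre⟩
end AuxWalk

end PetriNet
namespace PetriNet

section AuxStuck
set_option linter.unusedSectionVars false

variable {Q T : Type} [Fintype Q] [Fintype T]
variable {N : PetriNet Q T} {M0 : Q → ℕ} {R : Finset Q}

/-- Reversing an H4-path. -/
theorem path_reversed {l : List ({p : Q // p ∉ R} ⊕ T)} {a b : T}
    (hch : l.Chain' (N.delPlaces R).arc) (hhd : l.head? = some (Sum.inr a))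
    (hlast : l.getLast? = some (Sum.inr b)) :
    ∃ rl, l.reverse = Sum.inr b :: rl ∧
      List.Chain' (flip (N.delPlaces R).arc) (Sum.inr b :: rl) ∧
      (Sum.inr b :: rl).getLast? = some (Sum.inr a) := by
  have h1 : l.reverse.head? = some (Sum.inr b) := by rw [List.head?_reverse]; exact hlast
  obtain ⟨y, rl, hrl⟩ : ∃ y rl, l.reverse = y :: rl := by
    match hl : l.reverse with
    | [] => rw [hl] at h1; simp at h1
    | y :: rl => exact ⟨y, rl, rfl⟩
  have hyb : y = Sum.inr b := by rw [hrl] at h1; simpa using h1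
  subst hyb
  refine ⟨rl, hrl, ?_, ?_⟩
  · have hflip : l.Chain' (flip (flip (N.delPlaces R).arc)) := hch
    have := List.isChain_reverse.mpr hflip
    rw [hrl] at this
    exact this
  · rw [← hrl, List.getLast?_reverse]
    exact hhd

/-- All blocked places are empty at `Mc`. -/
theorem blk_empty (hAMG : N.isAMG M0 R) {Mc : Q → ℕ} {W : T → ℕ}
    (hbal : ∀ p, (M0 p : ℤ) = (Mc p : ℤ) + ∑ t, N.inc p t * (W t : ℤ)) :
    ∀ p, Blk N M0 R Mc W p → Mc p = 0 := by
  intro p h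
  induction h with
  | base p t hWt hpre hMc => exact hMc
  | path r a b l q hr hra hWb hab hch hhd hlast hunm hmem ih =>
    obtain ⟨rl, hrl, hch', hlast'⟩ := path_reversed hch hhd hlast
    have hmem' : Sum.inl q ∈ rl := by
      have : Sum.inl q ∈ l.reverse := List.mem_reverse.mpr hmem
      rw [hrl] at this
      rcases List.mem_cons.mp this with h | h
      · exact absurd h (by simp)
      · exact h
    have hunm' : ∀ x : {p : Q // p ∉ R}, Sum.inl x ∈ rl → M0 x.1 = 0 := by
      intro x hx
      refine hunm x ?_
      have : Sum.inl x ∈ l.reverse := by rw [hrl]; simp [hx]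
      exact List.mem_reverse.mp this
    exact (walk hAMG hbal rl.length rl b a le_rfl hWb hch' hunm' hlast' q hmem').1

/-- In a stuck state, every plan transition has a blocked input place. -/
theorem stuck_input (hAMG : N.isAMG M0 R) {Mc : Q → ℕ} {W : T → ℕ}
    (hstuck : ∀ t, 0 < W t → ¬ N.enabled Mc t) {t : T} (hWt : 0 < W t) :
    ∃ x, Blk N M0 R Mc W x ∧ 0 < N.pre x t := by
  have := hstuck t hWt
  unfold enabled at this
  push_neg at this
  obtain ⟨x, hx⟩ := this
  have h1 : 0 < N.pre x t := by omega
  have h2 : Mc x = 0 := by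
    have := (hAMG.1 x t).1
    omega
  exact ⟨x, Blk.base x t hWt h1 h2, h1⟩

/-- The set of blocked places is (the underlying set of) a siphon. -/
theorem blk_cover (hAMG : N.isAMG M0 R) {Mc : Q → ℕ} {W : T → ℕ}
    (hbal : ∀ p, (M0 p : ℤ) = (Mc p : ℤ) + ∑ t, N.inc p t * (W t : ℤ))
    (hstuck : ∀ t, 0 < W t → ¬ N.enabled Mc t) :
    ∀ p, Blk N M0 R Mc W p → ∀ t', 0 < N.post t' p →
      ∃ x, Blk N M0 R Mc W x ∧ 0 < N.pre x t' := by
  intro p hp t' hpost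
  by_cases hpR : p ∈ R
  · -- resource place: use the H2 data
    obtain ⟨Dr, hcard, hinjf, hinjs, hpre_iff, hpost_iff, hpathE, hpathU⟩ := hAMG.2.2.1 p hpR
    obtain ⟨ab, habD, habsnd⟩ := (hpost_iff t').1 hpost
    by_cases hW : 0 < W t'
    · exact stuck_input hAMG hstuck hW
    · have hWt' : W t' = 0 := Nat.eq_zero_of_not_pos hW
      by_cases hab : ab.1 = ab.2
      · -- the pair is a self-loop on the resource
        refine ⟨p, hp, ?_⟩
        exact (hpre_iff t').2 ⟨ab, habD, by rw [hab, habsnd]⟩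
      · obtain ⟨l, hch, hhd, hlast, hnodup, hunm⟩ := hpathU ab habD hab
        rw [habsnd] at hlast hab
        obtain ⟨rl, hrl, hch', hlast'⟩ := path_reversed hch hhd hlast
        -- rl is nonempty and starts with a place
        match rl, hrl, hch', hlast' with
        | [], hrl, hch', hlast' =>
          exfalso
          simp [List.getLast?] at hlast'
          exact hab hlast'.symm
        | z :: rl', hrl, hch', hlast' =>
          have hz1 : (flip (N.delPlaces R).arc) (Sum.inr t') z := (List.isChain_cons_cons.mp hch').1
          match z, hz1 with
          | Sum.inr w, hz1 => exact absurd hz1 arc_inr_inr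
          | Sum.inl qk, hz1 =>
            have hqk : 0 < N.pre qk.1 t' := hz1
            have hmem : Sum.inl qk ∈ l := by
              have : Sum.inl qk ∈ l.reverse := by rw [hrl]; simp
              exact List.mem_reverse.mp this
            have hpa : 0 < N.pre p ab.1 := (hpre_iff ab.1).2 ⟨ab, habD, rfl⟩
            exact ⟨qk.1, Blk.path p ab.1 t' l qk hp hpa hWt' hab hch hhd hlast hunm hmem, hqk⟩
  · -- non-resource place
    obtain ⟨tp, tc, htp, htc, hsum⟩ := amg_nonres hAMG hpR
    have ht'tp : t' = tp := (htp t').1 hpost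
    cases hp with
    | base p t hWt hpre hMc =>
      have httc : t = tc := (htc t).1 hpre
      have hWtp : 0 < W tp := by
        have hb := hbal p
        rw [hsum W, hMc] at hb
        rw [httc] at hWt
        have h0 : (0:ℤ) ≤ (M0 p : ℤ) := by positivity
        omega
      obtain ⟨x, hx1, hx2⟩ := stuck_input hAMG hstuck hWtp
      exact ⟨x, hx1, by rw [ht'tp]; exact hx2⟩
    | path r a b l q hr hra hWb hab hch hhd hlast hunm hmem =>
      obtain ⟨rl, hrl, hch', hlast'⟩ := path_reversed hch hhd hlast
      have hmem' : Sum.inl q ∈ rl := by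
        have : Sum.inl q ∈ l.reverse := List.mem_reverse.mpr hmem
        rw [hrl] at this
        rcases List.mem_cons.mp this with h | h
        · exact absurd h (by simp)
        · exact h
      have hunm' : ∀ x : {p : Q // p ∉ R}, Sum.inl x ∈ rl → M0 x.1 = 0 := by
        intro x hx
        refine hunm x ?_
        have : Sum.inl x ∈ l.reverse := by rw [hrl]; simp [hx]
        exact List.mem_reverse.mp this
      obtain ⟨-, hcov⟩ :=
        walk hAMG hbal rl.length rl b a le_rfl hWb hch' hunm' hlast' q hmem'
      rcases hcov t' hpost with h | ⟨q', hq', hpre'⟩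
      · exact ⟨r, hr, by rw [h]; exact hra⟩
      · have hq'mem : Sum.inl q' ∈ l := by
          have : Sum.inl q' ∈ l.reverse := by rw [hrl]; simp [hq']
          exact List.mem_reverse.mp this
        exact ⟨q'.1, Blk.path r a b l q' hr hra hWb hab hch hhd hlast hunm hq'mem, hpre'⟩

/-- A stuck state with a nonzero plan is impossible. -/
theorem stuck_contra (hAMG : N.isAMG M0 R) (hlive : N.live M0)
    (hsiph : ∀ D : Finset Q, N.isMinSiphon D → N.inducedConservative D)
    {Mc : Q → ℕ} {W : T → ℕ} (hPR : N.potReach M0 Mc)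
    (hbal : ∀ p, (M0 p : ℤ) = (Mc p : ℤ) + ∑ t, N.inc p t * (W t : ℤ))
    (hstuck : ∀ t, 0 < W t → ¬ N.enabled Mc t) (hex : ∃ t, 0 < W t) : False := by
  classical
  obtain ⟨t, hWt⟩ := hex
  obtain ⟨x, hxB, -⟩ := stuck_input hAMG hstuck hWt
  set D : Finset Q := Finset.univ.filter (fun p => Blk N M0 R Mc W p) with hD
  have hmemD : ∀ p, p ∈ D ↔ Blk N M0 R Mc W p := by
    intro p
    simp [hD]
  have hsiD : N.isSiphon D := by
    intro t' ⟨p, hpD, hpost⟩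
    obtain ⟨x', hx'B, hx'pre⟩ := blk_cover hAMG hbal hstuck p ((hmemD p).1 hpD) t' hpost
    exact ⟨x', (hmemD x').2 hx'B, hx'pre⟩
  have hne : D.Nonempty := ⟨x, (hmemD x).2 hxB⟩
  obtain ⟨D', hsub, hmin⟩ := exists_minSiphon N D.card D le_rfl hne hsiD
  obtain ⟨p, hpD', hppos⟩ := minSiphon_marked hAMG hlive hsiph hmin hPR
  have : Mc p = 0 := blk_empty hAMG hbal p ((hmemD p).1 (hsub hpD'))
  omega

end AuxStuck

end PetriNet
namespace PetriNet

section AuxRealize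
set_option linter.unusedSectionVars false

variable {Q T : Type} [Fintype Q] [Fintype T]
variable {N : PetriNet Q T} {M0 : Q → ℕ} {R : Finset Q}

/-- Any nonnegative plan leading back to `M0` can be realized by an actual firing
sequence. -/
theorem realize (hAMG : N.isAMG M0 R) (hlive : N.live M0)
    (hsiph : ∀ D : Finset Q, N.isMinSiphon D → N.inducedConservative D) :
    ∀ (n : ℕ) (W : T → ℕ) (Mc : Q → ℕ), (∑ t, W t) = n → N.potReach M0 Mc →
      (∀ p, (M0 p : ℤ) = (Mc p : ℤ) + ∑ t, N.inc p t * (W t : ℤ)) →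
      N.reachable Mc M0 := by
  classical
  intro n
  induction n using Nat.strong_induction_on with
  | _ n ih =>
    intro W Mc hsum hPR hbal
    by_cases h0 : ∀ t, W t = 0
    · have hMc : Mc = M0 := by
        funext p
        have hb := hbal p
        have : ∑ t, N.inc p t * (W t : ℤ) = 0 := by
          refine Finset.sum_eq_zero fun t _ => ?_
          rw [h0 t]
          ring
        rw [this] at hb
        omega
      rw [hMc]
      exact N.reachable_refl M0
    · push_neg at h0
      obtain ⟨t₀, ht₀⟩ := h0
      have hex : ∃ t, 0 < W t := ⟨t₀, Nat.pos_of_ne_zero ht₀⟩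
      by_cases hen : ∃ t, 0 < W t ∧ N.enabled Mc t
      · obtain ⟨t, hWt, htEn⟩ := hen
        set W' : T → ℕ := fun t' => if t' = t then W t' - 1 else W t' with hW'
        set Mc' : Q → ℕ := N.fire Mc t with hMc'
        have hsum' : (∑ t', W' t') + 1 = n := by
          rw [← hsum]
          have : ∀ t' ∈ Finset.univ, W t' = W' t' + (if t' = t then 1 else 0) := by
            intro t' _
            by_cases h : t' = t
            · simp only [hW', h, if_pos]
              omega
            · simp [hW', h]
          rw [Finset.sum_congr rfl this, Finset.sum_add_distrib]
          simp
        have hnpos : 0 < n := by omega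
        have hbal' : ∀ p, (M0 p : ℤ) = (Mc' p : ℤ) + ∑ t', N.inc p t' * (W' t' : ℤ) := by
          intro p
          have hfire : (Mc' p : ℤ) = (Mc p : ℤ) + N.inc p t := fire_cast htEn p
          have hsplit : ∀ t', N.inc p t' * (W' t' : ℤ)
              = N.inc p t' * (W t' : ℤ) - (if t' = t then N.inc p t' else 0) := by
            intro t'
            by_cases h : t' = t
            · subst h
              have h1 : (W' t' : ℤ) = (W t' : ℤ) - 1 := by
                simp only [hW', if_pos]
                push_cast [Nat.cast_sub hWt]
                ring
              rw [h1]
              simp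
              ring
            · simp [hW', h]
          rw [Finset.sum_congr rfl (fun t' _ => hsplit t'), Finset.sum_sub_distrib]
          have : ∑ t', (if t' = t then N.inc p t' else 0) = N.inc p t := by simp
          rw [this, hfire, hbal p]
          ring
        have hPR' : N.potReach M0 Mc' := potReach_trans hPR (potReach_fire htEn)
        have hrec := ih (n - 1) (by omega) W' Mc' (by omega) hPR' hbal'
        obtain ⟨σ, hσ⟩ := hrec
        exact ⟨t :: σ, htEn, hσ⟩
      · exfalso
        push_neg at hen
        exact stuck_contra hAMG hlive hsiph hPR hbal
          (fun t ht => hen t ht) hex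

end AuxRealize

end PetriNet

/-- A live AMG in which every minimal siphon induces a conservative P-subnet is
strongly live. -/
theorem stmt12 {Q T : Type} [Fintype Q] [Fintype T]
    (N : PetriNet Q T) (M0 : Q → ℕ) (R : Finset Q)
    (hAMG : N.isAMG M0 R) (hlive : N.live M0)
    (hsiph : ∀ D : Finset Q, N.isMinSiphon D → N.inducedConservative D) :
    ∀ M : Q → ℕ, N.potReach M0 M → N.live M := by
  classical
  intro M hM
  intro tstar M₁ hreach
  -- M₁ is potentially reachable from M0
  have hM₁ : N.potReach M0 M₁ :=
    PetriNet.potReach_trans hM (PetriNet.reachable_potReach' hreach)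
  -- construct a plan from M₁ back to M0 using the all-ones T-invariant
  obtain ⟨Y, hY⟩ := hM₁
  set k : ℕ := Finset.univ.sup Y with hk
  set W : T → ℕ := fun t => k - Y t with hW
  have hYk : ∀ t, Y t ≤ k := fun t => Finset.le_sup (Finset.mem_univ t)
  have hWcast : ∀ t, (W t : ℤ) = (k : ℤ) - (Y t : ℤ) := by
    intro t
    simp only [hW]
    push_cast [Nat.cast_sub (hYk t)]
    ring
  have hbal : ∀ p, (M0 p : ℤ) = (M₁ p : ℤ) + ∑ t, N.inc p t * (W t : ℤ) := by
    intro p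
    have hzero : ∑ t, N.inc p t = 0 := PetriNet.amg_sum_inc_zero hAMG p
    have : ∑ t, N.inc p t * (W t : ℤ)
        = (k : ℤ) * (∑ t, N.inc p t) - ∑ t, N.inc p t * (Y t : ℤ) := by
      rw [Finset.mul_sum, ← Finset.sum_sub_distrib]
      refine Finset.sum_congr rfl fun t _ => ?_
      rw [hWcast t]
      ring
    rw [this, hzero, hY p]
    ring
  have hM₁PR : N.potReach M0 M₁ := ⟨Y, hY⟩
  have hback : N.reachable M₁ M0 :=
    PetriNet.realize hAMG hlive hsiph (∑ t, W t) W M₁ rfl hM₁PR hbal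
  obtain ⟨M₂, hM₂r, hM₂e⟩ := hlive tstar M0 (N.reachable_refl M0)
  exact ⟨M₂, PetriNet.reachable_trans N hback hM₂r, hM₂e⟩
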